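/- arXiv:1805.08817 — 3 statements merged into one kernel-verified Lean document; each statement's English description precedes it below -/
import Mathlib

section
/- Let u : ℝ^d → ℝ^d be a measurable vector field such that for almost every x ∈ ℝ^d and almost every y in the full ball B(x, δ₀) one has (u(x) − u(y)) · (x − y) = 0, where δ₀ > 0 is fixed. Then there exist a constant skew-symmetric matrix A and a constant vector b such that u(x) = A x + b for almost every x ∈ ℝ^d. -/
open MeasureTheory Matrix Metric Set
open scoped RealInnerProductSpace

variable {d : ℕ}
local notation "E" => EuclideanSpace ℝ (Fin d)

lemma full_meets_open {Ω : Set (EuclideanSpace ℝ (Fin d))} (hΩ : ∀ᵐ x, x ∈ Ω)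
    {U : Set (EuclideanSpace ℝ (Fin d))} (hU : IsOpen U) (hne : U.Nonempty) :
    (Ω ∩ U).Nonempty := by
  by_contra hc
  rw [Set.not_nonempty_iff_eq_empty] at hc
  have hsub : U ⊆ Ωᶜ := fun x hx hxΩ =>
    (Set.eq_empty_iff_forall_notMem.1 hc x) ⟨hxΩ, hx⟩
  have h1 : volume U ≤ volume Ωᶜ := measure_mono hsub
  have h2 : volume Ωᶜ = 0 := hΩ
  have h3 : 0 < volume U := hU.measure_pos volume hne
  rw [h2, le_zero_iff] at h1
  exact h3.ne' h1

lemma eqOn_of_ae_eqOn {f g : EuclideanSpace ℝ (Fin d) → EuclideanSpace ℝ (Fin d)}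
    (hf : Continuous f) (hg : Continuous g) {O : Set (EuclideanSpace ℝ (Fin d))}
    (hO : IsOpen O) (hae : ∀ᵐ z, z ∈ O → f z = g z) : Set.EqOn f g O := by
  intro z hz
  by_contra hne
  have hopen : IsOpen {w | f w ≠ g w} := isOpen_ne_fun hf hg
  obtain ⟨w, hw1, hw2, hw3⟩ := full_meets_open hae (hopen.inter hO) ⟨z, hne, hz⟩
  exact hw2 (hw1 hw3)

lemma affine_eq_of_eqOn {L L' : EuclideanSpace ℝ (Fin d) →ₗ[ℝ] EuclideanSpace ℝ (Fin d)}
    {b b' : EuclideanSpace ℝ (Fin d)} {O : Set (EuclideanSpace ℝ (Fin d))}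
    (hO : IsOpen O) (hne : O.Nonempty)
    (heq : ∀ z ∈ O, L z + b = L' z + b') : L = L' ∧ b = b' := by
  obtain ⟨z₀, hz₀⟩ := hne
  obtain ⟨r, hr, hball⟩ := Metric.isOpen_iff.1 hO z₀ hz₀
  have key : ∀ w : EuclideanSpace ℝ (Fin d), L w = L' w := by
    intro w
    rcases eq_or_ne w 0 with rfl | hw
    · simp
    · set t : ℝ := r / (2 * ‖w‖) with ht
      have hwpos : (0:ℝ) < ‖w‖ := norm_pos_iff.2 hw
      have htpos : 0 < t := by positivity
      have hmem : z₀ + t • w ∈ O := by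
        apply hball
        have : dist (z₀ + t • w) z₀ = t * ‖w‖ := by
          simp [dist_eq_norm, norm_smul, abs_of_pos htpos]
        rw [Metric.mem_ball, this]
        calc t * ‖w‖ = r / 2 := by rw [ht]; field_simp
        _ < r := by linarith
      have h1 := heq _ hmem
      have h2 := heq _ hz₀
      have h3 : L (z₀ + t • w) - L z₀ = L' (z₀ + t • w) - L' z₀ := by
        have e1 : L (z₀ + t • w) = L' (z₀ + t • w) + b' - b := by
          rw [eq_sub_iff_add_eq]; exact h1
        have e2 : L z₀ = L' z₀ + b' - b := by
          rw [eq_sub_iff_add_eq]; exact h2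
        rw [e1, e2]; abel
      rw [map_add, map_add, add_sub_cancel_left, add_sub_cancel_left,
        LinearMap.map_smul, LinearMap.map_smul] at h3
      exact smul_right_injective (EuclideanSpace ℝ (Fin d)) htpos.ne' h3
  refine ⟨LinearMap.ext key, ?_⟩
  have := heq z₀ hz₀
  rw [key z₀] at this
  exact add_left_cancel this

lemma span_diffs {Ω : Set (EuclideanSpace ℝ (Fin d))} (hΩ : ∀ᵐ x, x ∈ Ω)
    (c y₀ : EuclideanSpace ℝ (Fin d)) {ε : ℝ} (hε : 0 < ε) :
    Submodule.span ℝ ((fun y => y - y₀) '' (Ω ∩ ball c ε)) = ⊤ := by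
  by_contra hne
  set S := Submodule.span ℝ ((fun y => y - y₀) '' (Ω ∩ ball c ε)) with hS
  have hclosed : IsClosed (S : Set (EuclideanSpace ℝ (Fin d))) :=
    S.closed_of_finiteDimensional
  have hsub : Ω ∩ ball c ε ⊆ {y | y - y₀ ∈ S} := fun y hy =>
    Submodule.subset_span ⟨y, hy, rfl⟩
  have hPc : IsClosed {y : EuclideanSpace ℝ (Fin d) | y - y₀ ∈ S} :=
    hclosed.preimage (continuous_id.sub continuous_const)
  have hdense : ball c ε ⊆ closure (Ω ∩ ball c ε) := by
    intro z hz
    rw [_root_.mem_closure_iff]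
    intro U hU hzU
    obtain ⟨w, hw1, hw2, hw3⟩ := full_meets_open hΩ (hU.inter isOpen_ball) ⟨z, hzU, hz⟩
    exact ⟨w, hw2, hw1, hw3⟩
  have hball : ball c ε ⊆ {y | y - y₀ ∈ S} := fun z hz =>
    closure_minimal hsub hPc (hdense hz)
  have hint : c - y₀ ∈ interior (S : Set (EuclideanSpace ℝ (Fin d))) := by
    rw [mem_interior]
    refine ⟨ball (c - y₀) ε, ?_, isOpen_ball, mem_ball_self hε⟩
    intro v hv
    have : v + y₀ ∈ ball c ε := by
      rw [mem_ball] at hv ⊢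
      rw [dist_eq_norm] at hv ⊢
      convert hv using 2
      abel
    have := hball this
    simpa using this
  exact hne (Submodule.eq_top_of_nonempty_interior' _ ⟨_, hint⟩)

lemma local_affine {δ₀ : ℝ} (hδ₀ : 0 < δ₀)
    {u : EuclideanSpace ℝ (Fin d) → EuclideanSpace ℝ (Fin d)}
    {Ω : Set (EuclideanSpace ℝ (Fin d))} (hΩ : ∀ᵐ x, x ∈ Ω)
    (hΩdef : ∀ x ∈ Ω, ∀ᵐ y : EuclideanSpace ℝ (Fin d),
      y ∈ Metric.ball x δ₀ → ⟪u x - u y, x - y⟫ = 0)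
    (c : EuclideanSpace ℝ (Fin d)) :
    ∃ (L : EuclideanSpace ℝ (Fin d) →ₗ[ℝ] EuclideanSpace ℝ (Fin d))
      (b : EuclideanSpace ℝ (Fin d)),
      ∀ᵐ z, z ∈ ball c (δ₀/2) → u z = L z + b := by
  classical
  set ε := δ₀/4 with hεdef
  have hε : 0 < ε := by positivity
  -- pick y₀
  obtain ⟨y₀, hy₀Ω, hy₀b⟩ := full_meets_open hΩ isOpen_ball ⟨c, mem_ball_self hε⟩
  set D := (fun y => y - y₀) '' (Ω ∩ ball c ε) with hD
  have hspanD : Submodule.span ℝ D = ⊤ := span_diffs hΩ c y₀ hε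
  obtain ⟨s, hsD, hspan_s, hli⟩ := exists_linearIndependent ℝ D
  have hfin : s.Finite := hli.setFinite
  haveI := hfin.fintype
  have hspan_top : Submodule.span ℝ s = ⊤ := by rw [hspan_s, hspanD]
  let B : Module.Basis ↥s ℝ E := Module.Basis.mk hli (by rw [Subtype.range_coe, hspan_top])
  -- choose points
  have hyex : ∀ v : s, ∃ yv, (yv ∈ Ω ∧ yv ∈ ball c ε) ∧ yv - y₀ = (v : E) := by
    intro v
    obtain ⟨yv, hyv, heq⟩ := hsD v.2
    exact ⟨yv, hyv, heq⟩
  choose y hy1 hy2 using hyex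
  -- a.e. relations
  have hrel : ∀ y' , y' ∈ Ω → y' ∈ ball c ε →
      ∀ᵐ z : E, z ∈ ball c (δ₀/2) → ⟪u y' - u z, y' - z⟫ = 0 := by
    intro y' hy'Ω hy'b
    filter_upwards [hΩdef y' hy'Ω] with z hz hzb
    apply hz
    rw [mem_ball] at hzb hy'b ⊢
    calc dist z y' ≤ dist z c + dist c y' := dist_triangle _ _ _
    _ < δ₀/2 + ε := by rw [dist_comm c y']; linarith
    _ ≤ δ₀ := by rw [hεdef]; linarith
  have good : ∀ᵐ z : E, z ∈ ball c (δ₀/2) →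
      ((∀ v : s, ⟪u (y v) - u z, y v - z⟫ = 0) ∧ ⟪u y₀ - u z, y₀ - z⟫ = 0) := by
    have h1 : ∀ᵐ z : E, ∀ v : s, z ∈ ball c (δ₀/2) → ⟪u (y v) - u z, y v - z⟫ = 0 := by
      rw [ae_all_iff]
      exact fun v => hrel (y v) (hy1 v).1 (hy1 v).2
    filter_upwards [h1, hrel y₀ hy₀Ω hy₀b] with z hz1 hz2 hzb
    exact ⟨fun v => hz1 v hzb, hz2 hzb⟩
  -- the linear algebra
  set Φ : E →ₗ[ℝ] (↥s → ℝ) := LinearMap.pi (fun v => (innerSL ℝ ((v : E))).toLinearMap) with hΦ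
  have hΦapp : ∀ a (v : ↥s), Φ a v = ⟪(v:E), a⟫ := fun a v => rfl
  have hΦinj : Function.Injective Φ := by
    rw [← LinearMap.ker_eq_bot, Submodule.eq_bot_iff]
    intro a ha
    have hav : ∀ v : ↥s, ⟪(v:E), a⟫ = 0 := fun v => congrFun ha v
    have hall : ∀ x ∈ Submodule.span ℝ s, ⟪x, a⟫ = 0 := by
      intro x hx
      induction hx using Submodule.span_induction with
      | mem x hx => exact hav ⟨x, hx⟩
      | zero => simp
      | add x y _ _ hx hy => rw [inner_add_left, hx, hy]; ring
      | smul t x _ hx => rw [real_inner_smul_left, hx]; ring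
    have : ⟪a, a⟫ = 0 := hall a (by rw [hspan_top]; trivial)
    exact inner_self_eq_zero.1 this
  have hrank : Module.finrank ℝ E = Module.finrank ℝ (↥s → ℝ) := by
    rw [Module.finrank_eq_card_basis B, Module.finrank_fintype_fun_eq_card]
  let Ψ := LinearMap.linearEquivOfInjective Φ hΦinj hrank
  have hΨapp : ∀ a, Ψ a = Φ a := fun a => rfl
  set W : E →ₗ[ℝ] (↥s → ℝ) :=
    LinearMap.pi (fun v => -(innerSL ℝ (u (y v) - u y₀)).toLinearMap) with hW
  set κ : ↥s → ℝ := fun v => ⟪u (y v), y v⟫ - ⟪u y₀, y₀⟫ with hκ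
  refine ⟨Ψ.symm.toLinearMap ∘ₗ W, Ψ.symm κ, ?_⟩
  filter_upwards [good] with z hz hzb
  obtain ⟨hz1, hz2⟩ := hz hzb
  have key : Φ (u z) = W z + κ := by
    funext v
    have e1 := hz1 v
    have e2 := hz2
    rw [inner_sub_left, inner_sub_right, inner_sub_right] at e1 e2
    have hy2v := hy2 v
    have expand : ⟪(v:E), u z⟫ = ⟪u z, y v⟫ - ⟪u z, y₀⟫ := by
      rw [← hy2v, inner_sub_left, real_inner_comm (y v) (u z), real_inner_comm y₀ (u z)]
    rw [hΦapp, expand]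
    have eW : W z v = -(⟪u (y v), z⟫ - ⟪u y₀, z⟫) := by
      show -(innerSL ℝ (u (y v) - u y₀)) z = _
      rw [innerSL_apply_apply, inner_sub_left]
    have eκ : κ v = ⟪u (y v), y v⟫ - ⟪u y₀, y₀⟫ := rfl
    rw [Pi.add_apply, eW, eκ]
    linarith
  have : Ψ.symm (Φ (u z)) = u z := by rw [← hΨapp]; exact Ψ.symm_apply_apply _
  calc u z = Ψ.symm (Φ (u z)) := this.symm
  _ = Ψ.symm (W z + κ) := by rw [key]
  _ = Ψ.symm (W z) + Ψ.symm κ := map_add _ _ _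
  _ = (Ψ.symm.toLinearMap ∘ₗ W) z + Ψ.symm κ := rfl


/-- A measurable vector field whose projected differences vanish a.e. locally
is a.e. an affine map with skew-symmetric linear part. -/
theorem stmt3 (d : ℕ) (δ₀ : ℝ) (hδ₀ : 0 < δ₀)
    (u : EuclideanSpace ℝ (Fin d) → EuclideanSpace ℝ (Fin d)) (hu : Measurable u)
    (h : ∀ᵐ x : EuclideanSpace ℝ (Fin d),
      ∀ᵐ y : EuclideanSpace ℝ (Fin d),
        y ∈ Metric.ball x δ₀ → ⟪u x - u y, x - y⟫ = 0) :
    ∃ (A : Matrix (Fin d) (Fin d) ℝ) (b : EuclideanSpace ℝ (Fin d)),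
      Aᵀ = -A ∧
      ∀ᵐ x : EuclideanSpace ℝ (Fin d),
        u x = (EuclideanSpace.equiv (Fin d) ℝ).symm (A.mulVec x) + b := by
  classical
  have hΩ : ∀ᵐ x : EuclideanSpace ℝ (Fin d), x ∈
      {x | ∀ᵐ y : EuclideanSpace ℝ (Fin d),
        y ∈ Metric.ball x δ₀ → ⟪u x - u y, x - y⟫ = 0} := h
  have loc := local_affine hδ₀ hΩ (fun x hx => hx)
  choose Lc bc hLc using loc
  set ρ := δ₀ / 2 with hρdef
  have hρ : 0 < ρ := by positivity
  have glue : ∀ c c', dist c' c < ρ → Lc c = Lc c' ∧ bc c = bc c' := by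
    intro c c' hdist
    have hO : IsOpen (ball c ρ ∩ ball c' ρ) := isOpen_ball.inter isOpen_ball
    have hne : (ball c ρ ∩ ball c' ρ).Nonempty :=
      ⟨c', by rw [mem_inter_iff, mem_ball, mem_ball]; exact ⟨hdist, by simp [hρ]⟩⟩
    have hae : ∀ᵐ z : EuclideanSpace ℝ (Fin d), z ∈ ball c ρ ∩ ball c' ρ →
        (fun z => Lc c z + bc c) z = (fun z => Lc c' z + bc c') z := by
      filter_upwards [hLc c, hLc c'] with z h1 h2 hz
      rw [← h1 hz.1, ← h2 hz.2]
    have heqOn := eqOn_of_ae_eqOn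
      (((Lc c).continuous_of_finiteDimensional).add continuous_const)
      (((Lc c').continuous_of_finiteDimensional).add continuous_const) hO hae
    exact affine_eq_of_eqOn hO hne (fun z hz => heqOn hz)
  set L₀ := Lc 0 with hL₀
  set b₀ := bc 0 with hb₀
  have hG : {c : EuclideanSpace ℝ (Fin d) | Lc c = L₀ ∧ bc c = b₀} = univ := by
    apply IsClopen.eq_univ
    · constructor
      · rw [← isOpen_compl_iff, isOpen_iff_mem_nhds]
        intro c hc
        rw [_root_.mem_nhds_iff]
        refine ⟨ball c ρ, ?_, isOpen_ball, mem_ball_self hρ⟩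
        intro c' hc' hc'G
        apply hc
        have := glue c c' (by rwa [mem_ball] at hc')
        exact ⟨this.1.trans hc'G.1, this.2.trans hc'G.2⟩
      · rw [isOpen_iff_mem_nhds]
        intro c hc
        rw [_root_.mem_nhds_iff]
        refine ⟨ball c ρ, ?_, isOpen_ball, mem_ball_self hρ⟩
        intro c' hc'
        have := glue c' c (by rw [mem_ball] at hc'; rwa [dist_comm])
        exact ⟨this.1.trans hc.1, this.2.trans hc.2⟩
    · exact ⟨0, rfl, rfl⟩
  have hglobal' : ∀ c, ∀ᵐ z : EuclideanSpace ℝ (Fin d),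
      z ∈ ball c ρ → u z = L₀ z + b₀ := by
    intro c
    have hcG : Lc c = L₀ ∧ bc c = b₀ := by
      have : c ∈ {c : EuclideanSpace ℝ (Fin d) | Lc c = L₀ ∧ bc c = b₀} := by rw [hG]; trivial
      exact this
    filter_upwards [hLc c] with z hz hzb
    rw [← hcG.1, ← hcG.2]; exact hz hzb
  obtain ⟨C, hCc, hCd⟩ := TopologicalSpace.exists_countable_dense (EuclideanSpace ℝ (Fin d))
  have hglobal : ∀ᵐ z : EuclideanSpace ℝ (Fin d), u z = L₀ z + b₀ := by
    have : ∀ᵐ z : EuclideanSpace ℝ (Fin d), ∀ c, (hc : c ∈ C) → z ∈ ball c ρ → u z = L₀ z + b₀ :=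
      (ae_ball_iff hCc).2 (fun c _ => hglobal' c)
    filter_upwards [this] with z hz
    obtain ⟨c, hcC, hcd⟩ := hCd.exists_dist_lt z hρ
    exact hz c hcC (mem_ball.2 hcd)
  -- skewness
  have haeae : ∀ᵐ x : EuclideanSpace ℝ (Fin d), ∀ᵐ y : EuclideanSpace ℝ (Fin d),
      x ∈ ball (0:EuclideanSpace ℝ (Fin d)) (δ₀/4) → y ∈ ball (0:EuclideanSpace ℝ (Fin d)) (δ₀/4) →
      ⟪L₀ (x - y), x - y⟫ = 0 := by
    filter_upwards [hglobal, h] with x hx1 hx2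
    filter_upwards [hglobal, hx2] with y hy1 hy2 hxB hyB
    have hdist : y ∈ ball x δ₀ := by
      rw [_root_.mem_ball_zero_iff] at hxB hyB
      rw [mem_ball, dist_eq_norm]
      calc ‖y - x‖ ≤ ‖y‖ + ‖x‖ := norm_sub_le _ _
      _ < δ₀/4 + δ₀/4 := by linarith
      _ ≤ δ₀ := by linarith
    have h0 := hy2 hdist
    rw [hx1, hy1] at h0
    have e : (L₀ x + b₀) - (L₀ y + b₀) = L₀ (x - y) := by rw [map_sub]; abel
    rwa [e] at h0
  have hpairs : ∀ x ∈ ball (0:EuclideanSpace ℝ (Fin d)) (δ₀/4),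
      ∀ y ∈ ball (0:EuclideanSpace ℝ (Fin d)) (δ₀/4), ⟪L₀ (x - y), x - y⟫ = 0 := by
    intro x₀ hx₀ y₀ hy₀
    by_contra hF
    have hcx : Continuous fun x : EuclideanSpace ℝ (Fin d) => ⟪L₀ (x - y₀), x - y₀⟫ := by
      have h1 : Continuous fun x : EuclideanSpace ℝ (Fin d) => x - y₀ :=
        continuous_id.sub continuous_const
      exact (L₀.continuous_of_finiteDimensional.comp h1).inner h1
    have hUopen : IsOpen (ball (0:EuclideanSpace ℝ (Fin d)) (δ₀/4) ∩
        {x | ⟪L₀ (x - y₀), x - y₀⟫ ≠ 0}) :=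
      isOpen_ball.inter (isOpen_ne_fun hcx continuous_const)
    obtain ⟨x1, hx1Ω, hx1B, hx1ne⟩ := full_meets_open haeae hUopen ⟨x₀, hx₀, hF⟩
    have hcy : Continuous fun y : EuclideanSpace ℝ (Fin d) => ⟪L₀ (x1 - y), x1 - y⟫ := by
      have h1 : Continuous fun y : EuclideanSpace ℝ (Fin d) => x1 - y :=
        continuous_const.sub continuous_id
      exact (L₀.continuous_of_finiteDimensional.comp h1).inner h1
    have hVopen : IsOpen (ball (0:EuclideanSpace ℝ (Fin d)) (δ₀/4) ∩
        {y | ⟪L₀ (x1 - y), x1 - y⟫ ≠ 0}) :=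
      isOpen_ball.inter (isOpen_ne_fun hcy continuous_const)
    obtain ⟨y1, hy1P, hy1B, hy1ne⟩ := full_meets_open hx1Ω hVopen ⟨y₀, hy₀, hx1ne⟩
    exact hy1ne (hy1P hx1B hy1B)
  have hLL : ∀ v : EuclideanSpace ℝ (Fin d), ⟪L₀ v, v⟫ = 0 := by
    intro v
    rcases eq_or_ne v 0 with rfl | hv
    · simp
    · have hvpos : (0:ℝ) < ‖v‖ := norm_pos_iff.2 hv
      set t : ℝ := δ₀ / (8 * ‖v‖) with htdef
      have ht : 0 < t := by positivity
      have hx : t • v ∈ ball (0:EuclideanSpace ℝ (Fin d)) (δ₀/4) := by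
        rw [_root_.mem_ball_zero_iff, norm_smul, Real.norm_eq_abs, abs_of_pos ht]
        calc t * ‖v‖ = δ₀ / 8 := by rw [htdef]; field_simp
        _ < δ₀/4 := by linarith
      have h0 : (0:EuclideanSpace ℝ (Fin d)) ∈ ball (0:EuclideanSpace ℝ (Fin d)) (δ₀/4) :=
        mem_ball_self (by positivity)
      have := hpairs _ hx _ h0
      rw [sub_zero, LinearMap.map_smul, real_inner_smul_left, real_inner_smul_right] at this
      have h2 : t * (t * ⟪L₀ v, v⟫) = 0 := this
      have h3 := mul_eq_zero.1 h2
      rcases h3 with h3 | h3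
      · exact absurd h3 ht.ne'
      · rcases mul_eq_zero.1 h3 with h4 | h4
        · exact absurd h4 ht.ne'
        · exact h4
  have hskew : ∀ v w : EuclideanSpace ℝ (Fin d), ⟪L₀ v, w⟫ = -⟪L₀ w, v⟫ := by
    intro v w
    have := hLL (v + w)
    rw [map_add, inner_add_left, inner_add_right, inner_add_right, hLL v, hLL w] at this
    linarith
  -- build the matrix
  set eqv := EuclideanSpace.equiv (Fin d) ℝ with heqv
  set L' : (Fin d → ℝ) →ₗ[ℝ] (Fin d → ℝ) :=
    (eqv.toLinearEquiv.toLinearMap ∘ₗ L₀) ∘ₗ eqv.symm.toLinearEquiv.toLinearMap with hL'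
  set A := LinearMap.toMatrix' L' with hA
  have hmul : ∀ v : Fin d → ℝ, A.mulVec v = L' v := fun v => by
    rw [← Matrix.toLin'_apply, hA, Matrix.toLin'_toMatrix']
  have hAij : ∀ i j, A i j = (L₀ (EuclideanSpace.single j 1)) i := by
    intro i j
    rw [hA, LinearMap.toMatrix'_apply]
    have hps : (fun j' => if j' = j then (1:ℝ) else 0) = Pi.single j 1 := by
      funext j'; rw [Pi.single_apply]
    rfl
  have hAskew : Aᵀ = -A := by
    ext i j
    rw [Matrix.transpose_apply, Matrix.neg_apply, hAij, hAij]
    have h1 : (L₀ (EuclideanSpace.single i 1)) j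
        = ⟪L₀ (EuclideanSpace.single i 1), EuclideanSpace.single j 1⟫ := by
      rw [EuclideanSpace.inner_single_right]; simp
    have h2 : (L₀ (EuclideanSpace.single j 1)) i
        = ⟪L₀ (EuclideanSpace.single j 1), EuclideanSpace.single i 1⟫ := by
      rw [EuclideanSpace.inner_single_right]; simp
    rw [h1, h2, hskew]
  refine ⟨A, b₀, hAskew, ?_⟩
  filter_upwards [hglobal] with x hx
  rw [hx]
  congr 1
  rw [hmul]
  rfl
end

section
/- Let u : ℝ^d → ℝ^d be continuously differentiable on a connected open set Ω, and suppose (u(x) − u(y)) · (x − y) = 0 for all x, y ∈ Ω with |x − y| < δ₀ for some δ₀ > 0. Then the symmetric part of the gradient of u vanishes on Ω, i.e. ∇u(x) + ∇u(x)ᵀ = 0 for all x ∈ Ω. -/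
open scoped RealInnerProductSpace

/-- If u is C¹ on a connected open set Ω and its projected differences vanish locally,
then the symmetric part of the gradient of u vanishes on Ω. -/
theorem stmt4 (d : ℕ) (Ω : Set (EuclideanSpace ℝ (Fin d))) (hΩ : IsOpen Ω)
    (hconn : IsConnected Ω) (δ₀ : ℝ) (hδ₀ : 0 < δ₀)
    (u : EuclideanSpace ℝ (Fin d) → EuclideanSpace ℝ (Fin d))
    (hu : ContDiffOn ℝ 1 u Ω)
    (h : ∀ x ∈ Ω, ∀ y ∈ Ω, dist x y < δ₀ → ⟪u x - u y, x - y⟫ = 0) :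
    ∀ x ∈ Ω, ∀ v w : EuclideanSpace ℝ (Fin d),
      ⟪fderiv ℝ u x v, w⟫ + ⟪fderiv ℝ u x w, v⟫ = 0 := by
  intro x hx
  have hdiff : DifferentiableAt ℝ u x :=
    (hu.differentiableOn one_ne_zero).differentiableAt (hΩ.mem_nhds hx)
  have key : ∀ v : EuclideanSpace ℝ (Fin d), ⟪fderiv ℝ u x v, v⟫ = 0 := by
    intro v
    set φ : ℝ → ℝ := fun t => ⟪u (x + t • v) - u x, v⟫ with hφ
    -- curve derivative
    have hcurve : HasDerivAt (fun t : ℝ => x + t • v) v 0 := by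
      simpa using (((hasDerivAt_id (0:ℝ)).smul_const v).const_add x)
    have hfd : HasFDerivAt u (fderiv ℝ u x) (x + (0:ℝ) • v) := by
      simpa using hdiff.hasFDerivAt
    have hcomp : HasDerivAt (fun t : ℝ => u (x + t • v)) (fderiv ℝ u x v) 0 :=
      hfd.comp_hasDerivAt 0 hcurve
    have hsub : HasDerivAt (fun t : ℝ => u (x + t • v) - u x) (fderiv ℝ u x v) 0 := by
      simpa using hcomp.sub_const (u x)
    have hconstv : HasDerivAt (fun _ : ℝ => v) (0 : EuclideanSpace ℝ (Fin d)) 0 :=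
      hasDerivAt_const 0 v
    have hφd : HasDerivAt φ (⟪fderiv ℝ u x v, v⟫) 0 := by
      have := hsub.inner ℝ hconstv
      simpa using this
    -- φ vanishes near 0
    have hzero : φ =ᶠ[nhds (0:ℝ)] fun _ => 0 := by
      have hcont : Continuous (fun t : ℝ => x + t • v) :=
        continuous_const.add (continuous_id.smul continuous_const)
      have hΩnh : ∀ᶠ t in nhds (0:ℝ), x + t • v ∈ Ω := by
        have : (fun t : ℝ => x + t • v) ⁻¹' Ω ∈ nhds (0:ℝ) := by
          apply hcont.continuousAt.preimage_mem_nhds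
          simpa using hΩ.mem_nhds hx
        exact this
      have hdist : ∀ᶠ t in nhds (0:ℝ), dist (x + t • v) x < δ₀ := by
        have htend : Filter.Tendsto (fun t : ℝ => |t| * ‖v‖) (nhds 0) (nhds 0) := by
          simpa using ((continuous_abs.tendsto (0:ℝ)).mul_const ‖v‖)
        have hev : ∀ᶠ t in nhds (0:ℝ), |t| * ‖v‖ < δ₀ :=
          htend.eventually_lt_const hδ₀
        filter_upwards [hev] with t ht
        have : dist (x + t • v) x = |t| * ‖v‖ := by
          rw [dist_eq_norm]
          have : x + t • v - x = t • v := by abel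
          rw [this, norm_smul, Real.norm_eq_abs]
        rw [this]; exact ht
      filter_upwards [hΩnh, hdist] with t ht hd
      have h0 := h _ ht x hx hd
      have : x + t • v - x = t • v := by abel
      rw [this] at h0
      rcases eq_or_ne t 0 with rfl | htne
      · simp [hφ]
      · have : t * ⟪u (x + t • v) - u x, v⟫ = 0 := by
          rw [real_inner_smul_right] at h0; linarith
        have := mul_eq_zero.mp this
        simpa [hφ, htne] using this
    have hzd : HasDerivAt φ 0 0 :=
      (hasDerivAt_const (0:ℝ) (0:ℝ)).congr_of_eventuallyEq hzero
    exact hφd.unique hzd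
  intro v w
  have hvw := key (v + w)
  have hv := key v
  have hw := key w
  rw [map_add] at hvw
  rw [inner_add_left, inner_add_right, inner_add_right] at hvw
  linarith
end

section
/- Let Ω ⊂ ℝ^d be open and bounded, s ∈ (0,1), ρ(ξ) = |ξ|^{−d−2s+2} 1_{Λ ∩ B_1}(ξ) for a double cone Λ with apex at 0. Then there exists C_P > 0 such that for all u ∈ L²(ℝ^d; ℝ^d) vanishing a.e. outside Ω, ‖u‖²_{L²} ≤ C_P ∬_{ℝ^d×ℝ^d} ρ(x−y) ((u(x)−u(y))·(x−y)/|x−y|)² / |x−y|² · |x−y|² dy dx, i.e. the Poincaré–Korn inequality ‖u‖²_{L²} ≤ C_P ∬ k(x−y) |D(u)(x,y)|² dy dx holds with k(ξ) = |ξ|^{−d−2s} 1_{Λ∩B_1}(ξ). -/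
open MeasureTheory Metric
open scoped RealInnerProductSpace ENNReal

section PoincareKornAux

variable {d : ℕ}
local notation "E" => EuclideanSpace ℝ (Fin d)

/-- Translation of a lintegral by `a - ·`. -/
lemma PK.lint_sub_left (f : E → ℝ≥0∞) (a : E) : ∫⁻ y, f (a - y) = ∫⁻ y, f y := by
  have h1 : ∫⁻ y, f (a + y) = ∫⁻ y, f (a - y) := by
    have := lintegral_map_equiv (μ := (volume : Measure E)) (fun y => f (a + y))
      (MeasurableEquiv.neg E)
    have h2 : Measure.map (⇑(MeasurableEquiv.neg E)) (volume : Measure E) = volume := by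
      have h3 : (⇑(MeasurableEquiv.neg E)) = fun x : E => -x := rfl
      rw [h3]; exact Measure.map_neg_eq_self (volume : Measure E)
    rw [h2] at this
    simp only [sub_eq_add_neg]
    rw [this]; rfl
  rw [← h1, lintegral_add_left_eq_self]

lemma PK.f_le (w h : E) : (⟪w, h⟫ / ‖h‖) ^ 2 ≤ ‖w‖ ^ 2 := by
  have habs : |⟪w, h⟫ / ‖h‖| ≤ ‖w‖ := by
    rcases eq_or_ne h 0 with rfl | hh
    · simp
    · rw [abs_div, abs_norm, div_le_iff₀ (norm_pos_iff.mpr hh)]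
      exact abs_real_inner_le_norm w h
  calc (⟪w, h⟫ / ‖h‖) ^ 2 = |⟪w, h⟫ / ‖h‖| ^ 2 := (sq_abs _).symm
    _ ≤ ‖w‖ ^ 2 := by exact pow_le_pow_left₀ (abs_nonneg _) habs 2

lemma PK.f_meas (w : E) : Measurable fun h : E => (⟪w, h⟫ / ‖h‖) ^ 2 :=
  ((measurable_const.inner measurable_id).div measurable_norm).pow_const 2

/-- Lower bound of the directional quadratic form over an open bounded set of directions. -/
lemma PK.dir_lower (hd : 0 < d) {U : Set E} (hUo : IsOpen U) (hUne : U.Nonempty)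
    (hU0 : (0 : E) ∉ U) (hUb : Bornology.IsBounded U) :
    ∃ c > (0:ℝ), ∀ w : E,
      ENNReal.ofReal (c * ‖w‖ ^ 2) ≤ ∫⁻ h in U, ENNReal.ofReal ((⟪w, h⟫ / ‖h‖) ^ 2) := by
  set f : E → E → ℝ := fun w h => (⟪w, h⟫ / ‖h‖) ^ 2 with hf
  have hUfin : volume U < ⊤ := hUb.measure_lt_top
  haveI : IsFiniteMeasure (volume.restrict U) :=
    ⟨by rwa [Measure.restrict_apply_univ]⟩
  have hint : ∀ w : E, IntegrableOn (f w) U := by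
    intro w
    refine Integrable.mono' (integrable_const (‖w‖ ^ 2)) ((PK.f_meas w).aestronglyMeasurable) ?_
    filter_upwards with h
    rw [Real.norm_eq_abs, abs_of_nonneg (sq_nonneg _)]
    exact PK.f_le w h
  set g : E → ℝ := fun w => ∫ h in U, f w h with hg
  have hgc : Continuous g := by
    rw [continuous_iff_continuousAt]
    intro v₀
    refine continuousAt_of_dominated (bound := fun _ => (‖v₀‖ + 1) ^ 2) ?_ ?_ ?_ ?_
    · filter_upwards with w using (PK.f_meas w).aestronglyMeasurable
    · filter_upwards [Metric.ball_mem_nhds v₀ one_pos] with w hw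
      filter_upwards with h
      rw [Real.norm_eq_abs, abs_of_nonneg (sq_nonneg _)]
      refine (PK.f_le w h).trans ?_
      have hwn : ‖w‖ ≤ ‖v₀‖ + 1 := by
        have h4 := mem_ball_iff_norm.mp hw
        calc ‖w‖ ≤ ‖v₀‖ + ‖w - v₀‖ := by
              simpa using norm_add_le (v₀) (w - v₀)
          _ ≤ ‖v₀‖ + 1 := by linarith
      exact pow_le_pow_left₀ (norm_nonneg _) hwn 2
    · exact integrable_const _
    · filter_upwards with h
      exact (((continuous_id.inner continuous_const).div_const _).pow 2).continuousAt
  haveI : Nontrivial E := by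
    refine nontrivial_of_ne (EuclideanSpace.single ⟨0, hd⟩ (1:ℝ)) 0 ?_
    intro hcontra
    have := congrArg (fun v : E => v ⟨0, hd⟩) hcontra
    simpa using this
  have hsne : (sphere (0:E) 1).Nonempty := NormedSpace.sphere_nonempty.mpr zero_le_one
  obtain ⟨v₀, hv₀s, hmin⟩ := (isCompact_sphere (0:E) 1).exists_isMinOn hsne hgc.continuousOn
  have hv₀ : ‖v₀‖ = 1 := by simpa using mem_sphere_iff_norm.mp hv₀s
  have hv₀ne : v₀ ≠ 0 := by intro hc; rw [hc] at hv₀; simp at hv₀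
  have hgpos : 0 < g v₀ := by
    have hnn : 0 ≤ᵐ[volume.restrict U] f v₀ := by
      filter_upwards with h using sq_nonneg _
    rw [hg]
    rw [setIntegral_pos_iff_support_of_nonneg_ae hnn (hint v₀)]
    set K : Submodule ℝ E := LinearMap.ker (innerSL ℝ v₀).toLinearMap with hK
    have hKne : K ≠ ⊤ := by
      intro hc
      have h5 : v₀ ∈ K := by rw [hc]; trivial
      have h6 : ⟪v₀, v₀⟫ = 0 := h5
      rw [real_inner_self_eq_norm_sq, hv₀] at h6
      norm_num at h6
    have hKnull : volume (K : Set E) = 0 := Measure.addHaar_submodule volume K hKne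
    have hsub : U \ (K : Set E) ⊆ Function.support (f v₀) ∩ U := by
      intro h ⟨hhU, hhK⟩
      refine ⟨?_, hhU⟩
      have hh0 : h ≠ 0 := fun hc => hU0 (hc ▸ hhU)
      have hinner : ⟪v₀, h⟫ ≠ 0 := fun hc => hhK hc
      have hne0 : (⟪v₀, h⟫ / ‖h‖) ^ 2 ≠ 0 :=
        pow_ne_zero 2 (div_ne_zero hinner (norm_ne_zero_iff.mpr hh0))
      simpa [hf, Function.mem_support] using hne0
    calc (0:ℝ≥0∞) < volume U := hUo.measure_pos volume hUne
      _ = volume (U \ (K : Set E)) := (measure_diff_null hKnull).symm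
      _ ≤ volume (Function.support (f v₀) ∩ U) := measure_mono hsub
  refine ⟨g v₀, hgpos, fun w => ?_⟩
  rcases eq_or_ne w 0 with rfl | hw
  · simp
  · set t : ℝ := ‖w‖ with ht
    have htpos : 0 < t := norm_pos_iff.mpr hw
    set v : E := t⁻¹ • w with hv
    have hvs : v ∈ sphere (0:E) 1 := by
      rw [mem_sphere_iff_norm, sub_zero, hv, norm_smul, norm_inv, Real.norm_eq_abs,
        abs_of_pos htpos, ← ht, inv_mul_cancel₀ htpos.ne']
    have hwv : w = t • v := by rw [hv, smul_smul, mul_inv_cancel₀ htpos.ne', one_smul]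
    have hpt : ∀ h, f w h = t ^ 2 * f v h := by
      intro h
      rw [hf]
      simp only
      rw [hwv, real_inner_smul_left, mul_div_assoc, mul_pow]
    have hgw : g w = t ^ 2 * g v := by
      rw [hg]
      simp only
      rw [← integral_const_mul]
      exact integral_congr_ae (by filter_upwards with h using hpt h)
    have hcle : g v₀ * ‖w‖ ^ 2 ≤ g w := by
      have h2 : g v₀ ≤ g v := hmin hvs
      rw [hgw]
      nlinarith [sq_nonneg t, h2, hgpos]
    calc ENNReal.ofReal (g v₀ * ‖w‖ ^ 2) ≤ ENNReal.ofReal (g w) := ENNReal.ofReal_le_ofReal hcle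
      _ ≤ ∫⁻ h in U, ENNReal.ofReal (f w h) :=
          le_of_eq (ofReal_integral_eq_lintegral_ofReal (hint w)
            (by filter_upwards with h using sq_nonneg _))

/-- Telescoping estimate for a single direction. -/
lemma PK.telescope (v : E → E) (hv : Measurable v) (Ω : Set E)
    (hv0 : ∀ᵐ x : E, x ∉ Ω → v x = 0)
    (R : ℝ) (hΩR : Ω ⊆ ball 0 R) (h : E) (N : ℕ)
    (hNh : 2 * R ≤ (N : ℝ) * ‖h‖) :
    ∫⁻ x, ENNReal.ofReal ((⟪v x, h⟫ / ‖h‖) ^ 2)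
      ≤ (N : ℝ≥0∞) ^ 2 * ∫⁻ x, ENNReal.ofReal ((⟪v x - v (x + h), h⟫ / ‖h‖) ^ 2) := by
  have hA : ∀ᵐ x : E, (x + (N : ℝ) • h ∉ Ω → v (x + (N : ℝ) • h) = 0) := by
    rw [ae_iff] at hv0 ⊢
    have heq : {x : E | ¬(x + (N : ℝ) • h ∉ Ω → v (x + (N : ℝ) • h) = 0)}
        = (fun x : E => x + (N : ℝ) • h) ⁻¹' {x : E | ¬(x ∉ Ω → v x = 0)} := rfl
    rw [heq, measure_preimage_add_right]
    exact hv0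
  have hae : ∀ᵐ x : E, (⟪v x, h⟫ / ‖h‖) ^ 2 ≤
      (N : ℝ) * ∑ j ∈ Finset.range N,
        (⟪v (x + (j : ℝ) • h) - v (x + ((j : ℝ) + 1) • h), h⟫ / ‖h‖) ^ 2 := by
    filter_upwards [hv0, hA] with x hx hxN
    by_cases hxΩ : x ∈ Ω
    · have hxR : ‖x‖ < R := mem_ball_zero_iff.mp (hΩR hxΩ)
      have hNx : x + (N : ℝ) • h ∉ Ω := by
        intro hc
        have h1 : ‖x + (N : ℝ) • h‖ < R := mem_ball_zero_iff.mp (hΩR hc)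
        have h2 : ‖(N : ℝ) • h‖ = (N : ℝ) * ‖h‖ := by
          rw [norm_smul, Real.norm_natCast]
        have h3 : ‖(N : ℝ) • h‖ ≤ ‖x + (N : ℝ) • h‖ + ‖x‖ := by
          simpa using norm_sub_le (x + (N : ℝ) • h) x
        linarith
      have h0 : v (x + (N : ℝ) • h) = 0 := hxN hNx
      set F : ℕ → ℝ := fun j => ⟪v (x + (j : ℝ) • h), h⟫ / ‖h‖ with hF
      have hF0 : F 0 = ⟪v x, h⟫ / ‖h‖ := by simp [hF]
      have hFN : F N = 0 := by simp [hF, h0]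
      have htel : F 0 = ∑ j ∈ Finset.range N, (F j - F (j + 1)) := by
        rw [Finset.sum_range_sub' F N, hFN, sub_zero]
      have hCS : (F 0) ^ 2 ≤ (N : ℝ) * ∑ j ∈ Finset.range N, (F j - F (j + 1)) ^ 2 := by
        rw [htel]
        simpa using sq_sum_le_card_mul_sum_sq (s := Finset.range N)
          (f := fun j => F j - F (j + 1))
      rw [← hF0]
      refine hCS.trans ?_
      refine mul_le_mul_of_nonneg_left (le_of_eq (Finset.sum_congr rfl fun j _ => ?_))
        (Nat.cast_nonneg N)
      rw [hF]
      simp only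
      rw [← sub_div, ← inner_sub_left]
      push_cast
      ring_nf
    · rw [hx hxΩ]
      simp only [inner_zero_left, zero_div]
      have hnn : (0:ℝ) ≤ (N : ℝ) * ∑ j ∈ Finset.range N,
          (⟪v (x + (j : ℝ) • h) - v (x + ((j : ℝ) + 1) • h), h⟫ / ‖h‖) ^ 2 := by
        positivity
      simpa using hnn
  have hmeas : ∀ j : ℕ, Measurable fun x : E =>
      ENNReal.ofReal ((⟪v (x + (j : ℝ) • h) - v (x + ((j : ℝ) + 1) • h), h⟫ / ‖h‖) ^ 2) := by
    intro j
    have m1 : Measurable fun x : E => v (x + (j : ℝ) • h) :=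
      hv.comp (measurable_id.add_const _)
    have m2 : Measurable fun x : E => v (x + ((j : ℝ) + 1) • h) :=
      hv.comp (measurable_id.add_const _)
    exact ((((m1.sub m2).inner measurable_const).div measurable_const).pow_const 2).ennreal_ofReal
  calc ∫⁻ x, ENNReal.ofReal ((⟪v x, h⟫ / ‖h‖) ^ 2)
      ≤ ∫⁻ x, ENNReal.ofReal ((N : ℝ) * ∑ j ∈ Finset.range N,
          (⟪v (x + (j : ℝ) • h) - v (x + ((j : ℝ) + 1) • h), h⟫ / ‖h‖) ^ 2) := by
        refine lintegral_mono_ae ?_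
        filter_upwards [hae] with x hx using ENNReal.ofReal_le_ofReal hx
    _ = (N : ℝ≥0∞) * ∫⁻ x, ∑ j ∈ Finset.range N,
          ENNReal.ofReal ((⟪v (x + (j : ℝ) • h) - v (x + ((j : ℝ) + 1) • h), h⟫ / ‖h‖) ^ 2) := by
        rw [← lintegral_const_mul' _ _ (by simp : (N : ℝ≥0∞) ≠ ⊤)]
        congr 1
        funext x
        rw [ENNReal.ofReal_mul (Nat.cast_nonneg N), ENNReal.ofReal_natCast,
          ENNReal.ofReal_sum_of_nonneg (fun j _ => sq_nonneg _)]
    _ = (N : ℝ≥0∞) * ∑ j ∈ Finset.range N, ∫⁻ x,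
          ENNReal.ofReal ((⟪v (x + (j : ℝ) • h) - v (x + ((j : ℝ) + 1) • h), h⟫ / ‖h‖) ^ 2) := by
        rw [lintegral_finset_sum _ (fun j _ => hmeas j)]
    _ = (N : ℝ≥0∞) * ∑ j ∈ Finset.range N, ∫⁻ x,
          ENNReal.ofReal ((⟪v x - v (x + h), h⟫ / ‖h‖) ^ 2) := by
        congr 1
        refine Finset.sum_congr rfl fun j _ => ?_
        have hstep : ∀ x : E, x + ((j : ℝ) + 1) • h = (x + (j : ℝ) • h) + h := by
          intro x
          rw [add_smul, one_smul, add_assoc]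
        calc ∫⁻ x, ENNReal.ofReal
              ((⟪v (x + (j : ℝ) • h) - v (x + ((j : ℝ) + 1) • h), h⟫ / ‖h‖) ^ 2)
            = ∫⁻ x, ENNReal.ofReal
              ((⟪v (x + (j : ℝ) • h) - v ((x + (j : ℝ) • h) + h), h⟫ / ‖h‖) ^ 2) := by
              congr 1; funext x; rw [hstep x]
          _ = ∫⁻ x, ENNReal.ofReal ((⟪v x - v (x + h), h⟫ / ‖h‖) ^ 2) :=
              lintegral_add_right_eq_self
                (fun x => ENNReal.ofReal ((⟪v x - v (x + h), h⟫ / ‖h‖) ^ 2)) ((j : ℝ) • h)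
    _ = (N : ℝ≥0∞) ^ 2 * ∫⁻ x, ENNReal.ofReal ((⟪v x - v (x + h), h⟫ / ‖h‖) ^ 2) := by
        rw [Finset.sum_const, Finset.card_range, nsmul_eq_mul, ← mul_assoc, sq]

end PoincareKornAux

/-- Fractional Poincaré–Korn inequality: for Ω open bounded, s ∈ (0,1) and the
cone-restricted fractional kernel k(ξ) = |ξ|^{−d−2s} 1_{Λ ∩ B₁}(ξ), there is C_P > 0 with
‖u‖²_{L²} ≤ C_P ∬ k(x−y) |D(u)(x,y)|² dy dx for all u ∈ L² vanishing a.e. outside Ω. -/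
theorem stmt19 (d : ℕ) (s : ℝ) (hs : s ∈ Set.Ioo (0 : ℝ) 1)
    (Ω : Set (EuclideanSpace ℝ (Fin d))) (hΩo : IsOpen Ω)
    (hΩb : Bornology.IsBounded Ω)
    (Λ : Set (EuclideanSpace ℝ (Fin d))) (hΛopen : IsOpen Λ) (hΛne : Λ.Nonempty)
    (hΛ0 : (0 : EuclideanSpace ℝ (Fin d)) ∉ Λ)
    (hΛsymm : ∀ h ∈ Λ, -h ∈ Λ)
    (hΛscale : ∀ t : ℝ, 0 < t → ∀ h ∈ Λ, t • h ∈ Λ)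
    (k : EuclideanSpace ℝ (Fin d) → ℝ)
    (hk : ∀ ξ, k ξ = ‖ξ‖ ^ (-((d : ℝ) + 2 * s)) *
      (Λ ∩ ball 0 1).indicator 1 ξ) :
    ∃ C_P > (0 : ℝ),
      ∀ u : EuclideanSpace ℝ (Fin d) → EuclideanSpace ℝ (Fin d),
        MemLp u 2 volume →
        (∀ᵐ x : EuclideanSpace ℝ (Fin d), x ∉ Ω → u x = 0) →
        (∫⁻ x, ENNReal.ofReal (‖u x‖ ^ 2))
          ≤ ENNReal.ofReal C_P *
            ∫⁻ x, ∫⁻ y,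
              ENNReal.ofReal (k (x - y) * (⟪u x - u y, x - y⟫ / ‖x - y‖) ^ 2) := by
  -- trivial case d = 0
  rcases Nat.eq_zero_or_pos d with hd0 | hd
  · subst hd0
    refine ⟨1, one_pos, fun u hu hu0 => ?_⟩
    have hz : ∀ x, u x = 0 := fun x => Subsingleton.elim _ _
    have hZ : (∫⁻ x, ENNReal.ofReal (‖u x‖ ^ 2)) = 0 := by
      simp [hz]
    rw [hZ]
    exact zero_le
  -- construct the direction ball U ⊆ Λ ∩ B₁
  obtain ⟨x₀, hx₀⟩ := hΛne
  have hx₀ne : x₀ ≠ 0 := fun hc => hΛ0 (hc ▸ hx₀)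
  have hn : 0 < ‖x₀‖ := norm_pos_iff.mpr hx₀ne
  set e₀ : (EuclideanSpace ℝ (Fin d)) := (2 * ‖x₀‖)⁻¹ • x₀ with he₀
  have he₀Λ : e₀ ∈ Λ := by
    rw [he₀]; exact hΛscale _ (by positivity) _ hx₀
  have he₀n : ‖e₀‖ = 1/2 := by
    rw [he₀, norm_smul, norm_inv, Real.norm_eq_abs, abs_of_pos (by positivity)]
    field_simp
  obtain ⟨ε, hε, hball⟩ := Metric.isOpen_iff.mp hΛopen e₀ he₀Λ
  set ε' : ℝ := min ε (1/8) with hε'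
  have hε'pos : 0 < ε' := lt_min hε (by norm_num)
  have hε'le : ε' ≤ 1/8 := min_le_right _ _
  set U : Set (EuclideanSpace ℝ (Fin d)) := ball e₀ ε' with hU
  have hUo : IsOpen U := isOpen_ball
  have hUne : U.Nonempty := ⟨e₀, mem_ball_self hε'pos⟩
  have hUmeas : MeasurableSet U := measurableSet_ball
  have hUb : Bornology.IsBounded U := isBounded_ball
  have hUsub : U ⊆ Λ := fun h hh => hball (ball_subset_ball (min_le_left _ _) hh)
  have hUnorm : ∀ h ∈ U, 3/8 ≤ ‖h‖ ∧ ‖h‖ ≤ 5/8 := by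
    intro h hh
    have hdist := mem_ball_iff_norm.mp hh
    have h3 : ‖e₀‖ ≤ ‖h‖ + ‖h - e₀‖ := by
      calc ‖e₀‖ = ‖h - (h - e₀)‖ := by rw [sub_sub_cancel]
        _ ≤ ‖h‖ + ‖h - e₀‖ := norm_sub_le _ _
    have h2 : ‖h‖ ≤ ‖e₀‖ + ‖h - e₀‖ := by
      calc ‖h‖ = ‖e₀ + (h - e₀)‖ := by rw [add_sub_cancel]
        _ ≤ ‖e₀‖ + ‖h - e₀‖ := norm_add_le _ _
    rw [he₀n] at h3 h2
    constructor <;> linarith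
  have hU0 : (0:(EuclideanSpace ℝ (Fin d))) ∉ U := by
    intro hc
    have := (hUnorm 0 hc).1
    simp at this
    linarith
  -- the radius R and step count N
  obtain ⟨R₀, hR₀⟩ := hΩb.subset_ball 0
  set R : ℝ := max R₀ 1 with hR
  have hRpos : (0:ℝ) < R := lt_of_lt_of_le one_pos (le_max_right _ _)
  have hΩR : Ω ⊆ ball 0 R := hR₀.trans (ball_subset_ball (le_max_left _ _))
  set N : ℕ := ⌈(6:ℝ) * R⌉₊ + 1 with hN
  have hNR : 6 * R ≤ (N : ℝ) := by
    calc (6:ℝ) * R ≤ (⌈(6:ℝ) * R⌉₊ : ℝ) := Nat.le_ceil _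
      _ ≤ (N : ℝ) := by rw [hN]; push_cast; linarith
  have hNh : ∀ h ∈ U, 2 * R ≤ (N : ℝ) * ‖h‖ := by
    intro h hh
    have h38 := (hUnorm h hh).1
    have hN0 : (0:ℝ) ≤ (N : ℝ) := Nat.cast_nonneg _
    calc 2 * R ≤ (6 * R) * (3/8) := by nlinarith
      _ ≤ (N : ℝ) * ‖h‖ := by nlinarith
  -- the direction constant
  obtain ⟨c, hcpos, hcdir⟩ := PK.dir_lower hd hUo hUne hU0 hUb
  -- the Poincaré constant
  refine ⟨(N : ℝ) ^ 2 / c, by positivity, fun u hu hu0 => ?_⟩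
  -- replace u by a measurable representative
  obtain ⟨v, hvmeas', hveq⟩ := hu.1
  have hvmeas : Measurable v := hvmeas'.measurable
  have hveq' : ∀ᵐ x : (EuclideanSpace ℝ (Fin d)), u x = v x := hveq
  have hv0 : ∀ᵐ x : (EuclideanSpace ℝ (Fin d)), x ∉ Ω → v x = 0 := by
    filter_upwards [hu0, hveq'] with x h1 h2 h3
    rw [← h2]; exact h1 h3
  have hLeq : (∫⁻ x, ENNReal.ofReal (‖u x‖ ^ 2)) = ∫⁻ x, ENNReal.ofReal (‖v x‖ ^ 2) := by
    refine lintegral_congr_ae ?_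
    filter_upwards [hveq'] with x hx
    rw [hx]
  have hReq : (∫⁻ x, ∫⁻ y, ENNReal.ofReal (k (x - y) * (⟪u x - u y, x - y⟫ / ‖x - y‖) ^ 2))
      = ∫⁻ x, ∫⁻ y, ENNReal.ofReal (k (x - y) * (⟪v x - v y, x - y⟫ / ‖x - y‖) ^ 2) := by
    refine lintegral_congr_ae ?_
    filter_upwards [hveq'] with x hx
    refine lintegral_congr_ae ?_
    filter_upwards [hveq'] with y hy
    rw [hx, hy]
  rw [hLeq, hReq]
  set Rv : ℝ≥0∞ := ∫⁻ x, ∫⁻ y,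
    ENNReal.ofReal (k (x - y) * (⟪v x - v y, x - y⟫ / ‖x - y‖) ^ 2) with hRv
  set Lv : ℝ≥0∞ := ∫⁻ x, ENNReal.ofReal (‖v x‖ ^ 2) with hLv
  -- the key chain
  have hchain : ENNReal.ofReal c * Lv ≤ (N : ℝ≥0∞) ^ 2 * Rv := by
    -- step 1: direction lower bound
    have step1 : ENNReal.ofReal c * Lv
        ≤ ∫⁻ x, ∫⁻ h in U, ENNReal.ofReal ((⟪v x, h⟫ / ‖h‖) ^ 2) := by
      rw [hLv, ← lintegral_const_mul' _ _ ENNReal.ofReal_ne_top]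
      refine lintegral_mono fun x => ?_
      rw [← ENNReal.ofReal_mul hcpos.le]
      exact hcdir (v x)
    -- step 2: swap
    have step2 : (∫⁻ x, ∫⁻ h in U, ENNReal.ofReal ((⟪v x, h⟫ / ‖h‖) ^ 2))
        = ∫⁻ h in U, ∫⁻ x, ENNReal.ofReal ((⟪v x, h⟫ / ‖h‖) ^ 2) := by
      refine lintegral_lintegral_swap ?_
      exact ((((hvmeas.comp measurable_fst).inner measurable_snd).div
        measurable_snd.norm).pow_const 2).ennreal_ofReal.aemeasurable
    -- step 3: telescoping per direction
    have step3 : (∫⁻ h in U, ∫⁻ x, ENNReal.ofReal ((⟪v x, h⟫ / ‖h‖) ^ 2))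
        ≤ (N : ℝ≥0∞) ^ 2 * ∫⁻ h in U, ∫⁻ x,
            ENNReal.ofReal ((⟪v x - v (x - h), h⟫ / ‖h‖) ^ 2) := by
      rw [← lintegral_const_mul' _ _ (by simp : ((N : ℝ≥0∞) ^ 2) ≠ ⊤)]
      refine lintegral_mono_ae ?_
      filter_upwards [ae_restrict_mem hUmeas] with h hh
      refine (PK.telescope v hvmeas Ω hv0 R hΩR h N (hNh h hh)).trans (le_of_eq ?_)
      congr 1
      have hflip : ∀ x : (EuclideanSpace ℝ (Fin d)), ENNReal.ofReal ((⟪v x - v (x + h), h⟫ / ‖h‖) ^ 2)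
          = (fun y : (EuclideanSpace ℝ (Fin d)) => ENNReal.ofReal ((⟪v y - v (y - h), h⟫ / ‖h‖) ^ 2)) (x + h) := by
        intro x
        simp only [add_sub_cancel_right]
        rw [show v x - v (x + h) = -(v (x + h) - v x) from (neg_sub _ _).symm,
          inner_neg_left, neg_div, neg_sq]
      calc (∫⁻ x, ENNReal.ofReal ((⟪v x - v (x + h), h⟫ / ‖h‖) ^ 2))
          = ∫⁻ x, (fun y : (EuclideanSpace ℝ (Fin d)) => ENNReal.ofReal ((⟪v y - v (y - h), h⟫ / ‖h‖) ^ 2)) (x + h) := by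
            congr 1; funext x; rw [hflip x]
        _ = ∫⁻ x, ENNReal.ofReal ((⟪v x - v (x - h), h⟫ / ‖h‖) ^ 2) :=
            lintegral_add_right_eq_self (μ := volume)
              (fun y => ENNReal.ofReal ((⟪v y - v (y - h), h⟫ / ‖h‖) ^ 2)) h
    -- step 4: swap back
    have step4 : (∫⁻ h in U, ∫⁻ x, ENNReal.ofReal ((⟪v x - v (x - h), h⟫ / ‖h‖) ^ 2))
        = ∫⁻ x, ∫⁻ h in U, ENNReal.ofReal ((⟪v x - v (x - h), h⟫ / ‖h‖) ^ 2) := by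
      refine (lintegral_lintegral_swap ?_).symm
      have m1 : Measurable fun p : (EuclideanSpace ℝ (Fin d)) × (EuclideanSpace ℝ (Fin d)) => v p.1 := hvmeas.comp measurable_fst
      have m2 : Measurable fun p : (EuclideanSpace ℝ (Fin d)) × (EuclideanSpace ℝ (Fin d)) => v (p.1 - p.2) :=
        hvmeas.comp (measurable_fst.sub measurable_snd)
      exact ((((m1.sub m2).inner measurable_snd).div
        measurable_snd.norm).pow_const 2).ennreal_ofReal.aemeasurable
    -- step 5: compare with the kernel integral
    have step5 : (∫⁻ x, ∫⁻ h in U, ENNReal.ofReal ((⟪v x - v (x - h), h⟫ / ‖h‖) ^ 2)) ≤ Rv := by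
      rw [hRv]
      refine lintegral_mono fun x => ?_
      have hinner : (∫⁻ h in U, ENNReal.ofReal ((⟪v x - v (x - h), h⟫ / ‖h‖) ^ 2))
          ≤ ∫⁻ h, ENNReal.ofReal (k h * (⟪v x - v (x - h), h⟫ / ‖h‖) ^ 2) := by
        refine le_trans (lintegral_mono_ae ?_) (setLIntegral_le_lintegral U _)
        filter_upwards [ae_restrict_mem hUmeas] with h hh
        refine ENNReal.ofReal_le_ofReal ?_
        have hk1 : 1 ≤ k h := by
          rw [hk h]
          have hmem : h ∈ Λ ∩ ball 0 1 := by
            refine ⟨hUsub hh, mem_ball_zero_iff.mpr ?_⟩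
            have := (hUnorm h hh).2; linarith
          rw [Set.indicator_of_mem hmem, Pi.one_apply, mul_one]
          refine Real.one_le_rpow_of_pos_of_le_one_of_nonpos ?_ ?_ ?_
          · have := (hUnorm h hh).1; linarith
          · have := (hUnorm h hh).2; linarith
          · have hs0 := hs.1
            have : (0:ℝ) ≤ (d:ℝ) := Nat.cast_nonneg _
            linarith
        exact le_mul_of_one_le_left (sq_nonneg _) hk1
      refine hinner.trans (le_of_eq ?_)
      have := PK.lint_sub_left
        (fun h : (EuclideanSpace ℝ (Fin d)) => ENNReal.ofReal (k h * (⟪v x - v (x - h), h⟫ / ‖h‖) ^ 2)) x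
      rw [← this]
      congr 1
      funext y
      rw [sub_sub_cancel]
    calc ENNReal.ofReal c * Lv
        ≤ ∫⁻ x, ∫⁻ h in U, ENNReal.ofReal ((⟪v x, h⟫ / ‖h‖) ^ 2) := step1
      _ = ∫⁻ h in U, ∫⁻ x, ENNReal.ofReal ((⟪v x, h⟫ / ‖h‖) ^ 2) := step2
      _ ≤ (N : ℝ≥0∞) ^ 2 * ∫⁻ h in U, ∫⁻ x,
            ENNReal.ofReal ((⟪v x - v (x - h), h⟫ / ‖h‖) ^ 2) := step3
      _ = (N : ℝ≥0∞) ^ 2 * ∫⁻ x, ∫⁻ h in U,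
            ENNReal.ofReal ((⟪v x - v (x - h), h⟫ / ‖h‖) ^ 2) := by rw [step4]
      _ ≤ (N : ℝ≥0∞) ^ 2 * Rv := mul_le_mul_right step5 _
  -- conclude
  have hcne0 : ENNReal.ofReal c ≠ 0 := by
    simp [ENNReal.ofReal_eq_zero, not_le, hcpos]
  have hcnetop : ENNReal.ofReal c ≠ ⊤ := ENNReal.ofReal_ne_top
  have hLle : Lv ≤ ((N : ℝ≥0∞) ^ 2 * Rv) / ENNReal.ofReal c := by
    rw [ENNReal.le_div_iff_mul_le (Or.inl hcne0) (Or.inl hcnetop), mul_comm]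
    exact hchain
  refine hLle.trans (le_of_eq ?_)
  rw [ENNReal.ofReal_div_of_pos hcpos, ENNReal.ofReal_pow (Nat.cast_nonneg _),
    ENNReal.ofReal_natCast]
  rw [ENNReal.div_eq_inv_mul, ENNReal.div_eq_inv_mul]
  ring
end
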